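/- Let d, n be positive integers, let p ≥ 2 be a real number, and let v₁, …, vₙ ∈ ℝ^d be points with ‖vᵢ‖_p ≤ 1 for all i. Let u be a point in the convex hull of {v₁, …, vₙ}, and let ε > 0. Then for every integer k with k ≥ 4(p−1)/ε² there exists a function i : {1,…,k} → {1,…,n} (a multiset of k of the points, repetitions allowed) such that ‖(1/k)·Σ_{t=1}^{k} v_{i(t)} − u‖_p ≤ ε. -/

import Mathlib

open Finset

/-- The ℓ_p norm of a finite-dimensional real vector, for real `p ≥ 1`. -/
noncomputable def lpNorm {ι : Type*} [Fintype ι] (p : ℝ) (x : ι → ℝ) : ℝ :=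
  (∑ j, |x j| ^ p) ^ (1 / p)

open Real Set

private lemma nonneg_of_deriv (f f' : ℝ → ℝ) (hc : ContinuousOn f (Icc 0 1))
    (hd : ∀ t ∈ Ioo (0:ℝ) 1, HasDerivAt f (f' t) t)
    (h' : ∀ t ∈ Ioo (0:ℝ) 1, 0 ≤ f' t) (h0 : f 0 = 0) :
    ∀ t, 0 ≤ t → t ≤ 1 → 0 ≤ f t := by
  intro t ht0 ht1
  have hmono : MonotoneOn f (Icc 0 1) := by
    apply monotoneOn_of_deriv_nonneg (convex_Icc 0 1) hc
    · intro x hx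
      rw [interior_Icc] at hx
      exact (hd x hx).differentiableAt.differentiableWithinAt
    · intro x hx
      rw [interior_Icc] at hx
      rw [(hd x hx).deriv]
      exact h' x hx
  have := hmono (left_mem_Icc.mpr zero_le_one) ⟨ht0, ht1⟩ ht0
  linarith [h0 ▸ this]

private lemma hasDerivAt_B (c e : ℝ) (s : ℝ) (hB : 0 < 1 + c * s ^ 2) :
    HasDerivAt (fun s : ℝ => (1 + c * s ^ 2) ^ e)
      (c * (2 * s) * e * (1 + c * s ^ 2) ^ (e - 1)) s := by
  have h1 : HasDerivAt (fun s : ℝ => 1 + c * s ^ 2) (c * (2 * s)) s := by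
    have := ((hasDerivAt_pow 2 s).const_mul c).const_add 1
    simpa using this
  exact h1.rpow_const (Or.inl hB.ne')

private lemma hasDerivAt_one_add (q : ℝ) (s : ℝ) (hs : 0 < 1 + s) :
    HasDerivAt (fun s : ℝ => (1 + s) ^ q) (q * (1 + s) ^ (q - 1)) s := by
  have h1 : HasDerivAt (fun s : ℝ => 1 + s) 1 s := (hasDerivAt_id s).const_add 1
  simpa using h1.rpow_const (p := q) (Or.inl hs.ne')

private lemma hasDerivAt_one_sub (q : ℝ) (s : ℝ) (hs : 0 < 1 - s) :
    HasDerivAt (fun s : ℝ => (1 - s) ^ q) (-(q * (1 - s) ^ (q - 1))) s := by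
  have h1 : HasDerivAt (fun s : ℝ => 1 - s) (-1) s := by
    simpa using (hasDerivAt_id s).const_sub 1
  have := h1.rpow_const (p := q) (Or.inl hs.ne')
  convert this using 1
  ring

private lemma cont_B (c e : ℝ) (hc : 0 ≤ c) : Continuous (fun s : ℝ => (1 + c * s ^ 2) ^ e) := by
  apply Continuous.rpow_const (by continuity)
  intro x
  left
  positivity

private lemma cont_one_add (q : ℝ) (hq : 0 ≤ q) : Continuous (fun s : ℝ => (1 + s) ^ q) :=
  Continuous.rpow_const (by continuity) (fun _ => Or.inr hq)

private lemma cont_one_sub (q : ℝ) (hq : 0 ≤ q) : Continuous (fun s : ℝ => (1 - s) ^ q) :=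
  Continuous.rpow_const (by continuity) (fun _ => Or.inr hq)

private lemma Qsmall (q c : ℝ) (hq0 : 0 < q) (hq2 : q ≤ 2) (hc1 : 1 ≤ c)
    (hc2 : 1 < q → 2 ≤ c) :
    ∀ s : ℝ, 0 ≤ s → s ≤ 1 → (1+s)^q + (1-s)^q ≤ 2*(1+c*s^2)^(q/2) := by
  have key : ∀ s, 0 ≤ s → s ≤ 1 →
      0 ≤ 2*(1+c*s^2)^(q/2) - (1+s)^q - (1-s)^q := by
    apply nonneg_of_deriv _
      (fun s => 2 * (c * (2 * s) * (q/2) * (1 + c * s ^ 2) ^ (q/2 - 1))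
        - q * (1 + s) ^ (q - 1) - -(q * (1 - s) ^ (q - 1)))
    · exact ((continuous_const.mul (cont_B c (q/2) (by linarith))).sub
        (cont_one_add q hq0.le)).sub (cont_one_sub q hq0.le) |>.continuousOn
    · intro s hs
      have hB : 0 < 1 + c * s ^ 2 := by nlinarith [sq_nonneg s]
      exact (((hasDerivAt_B c (q/2) s hB).const_mul 2).sub
        (hasDerivAt_one_add q s (by nlinarith [hs.1]))).sub
        (hasDerivAt_one_sub q s (by nlinarith [hs.2]))
    · intro s hs
      obtain ⟨hs0, hs1⟩ := hs
      have hB : (1:ℝ) ≤ 1 + c * s ^ 2 := by nlinarith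
      have hBpos : (0:ℝ) < 1 + c * s ^ 2 := by linarith
      have hBm : (0:ℝ) ≤ (1 + c * s ^ 2) ^ (q/2 - 1) := rpow_nonneg (by linarith) _
      rcases le_or_gt q 1 with hq1 | hq1
      · have h1 : (1 + s) ^ (q - 1) ≤ 1 :=
          rpow_le_one_of_one_le_of_nonpos (by linarith) (by linarith)
        have h2 : (1:ℝ) ≤ (1 - s) ^ (q - 1) :=
          one_le_rpow_of_pos_of_le_one_of_nonpos (by linarith) (by linarith) (by linarith)
        have h3 : (0:ℝ) ≤ 2 * (c * (2 * s) * (q/2) * (1 + c * s ^ 2) ^ (q/2 - 1)) := by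
          have hc0 : (0:ℝ) ≤ c := by linarith
          positivity
      
        nlinarith [mul_le_mul_of_nonneg_left h1 hq0.le, mul_le_mul_of_nonneg_left h2 hq0.le]
      · have hc2' := hc2 hq1
        have h1 : (1 + s) ^ (q - 1) ≤ 1 + (q - 1) * s := by
          simpa using rpow_one_add_le_one_add_mul_self (s := s) (p := q - 1)
            (by linarith) (by linarith) (by linarith)
        have h2 : 1 - s ≤ (1 - s) ^ (q - 1) := by
          have := rpow_le_rpow_of_exponent_ge (x := 1 - s) (y := 1) (z := q - 1)
            (by linarith) (by linarith) (by linarith)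
          simpa using this
        have h3 : (1 + s) ^ (q - 1) - (1 - s) ^ (q - 1) ≤ q * s := by nlinarith
        have hs2 : (0:ℝ) ≤ 1 - s^2 := by nlinarith
        have h4a : (1 + c * s ^ 2) ^ (1 - q/2) ≤ (1 + c) ^ (1 - q/2) :=
          rpow_le_rpow (by linarith)
            (by nlinarith [mul_nonneg (by linarith : (0:ℝ) ≤ c) hs2]) (by linarith)
        have h4b : (1 + c) ^ (1 - q/2) ≤ (1 + c) ^ ((1:ℝ)/2) :=
          rpow_le_rpow_of_exponent_le (by linarith) (by linarith)
        have h5 : (1 + c) ^ ((1:ℝ)/2) ≤ c := by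
          rw [show ((1:ℝ)/2) = (2:ℝ)⁻¹ by norm_num,
            rpow_inv_le_iff_of_pos (by linarith) (by linarith) (by norm_num),
            show ((2:ℝ)) = ((2:ℕ):ℝ) by norm_num, rpow_natCast]
          nlinarith
        have h6 : q * (1 + c * s ^ 2) ^ (1 - q/2) ≤ 2 * c := by
          have := mul_le_mul hq2 (h4a.trans h4b) (rpow_nonneg (by linarith) _)
            (by norm_num : (0:ℝ) ≤ 2)
          linarith
        have hBpos2 : (0:ℝ) < (1 + c * s ^ 2) ^ (1 - q/2) := rpow_pos_of_pos hBpos _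
        have h7 : q ≤ 2 * c * (1 + c * s ^ 2) ^ (q/2 - 1) := by
          rw [show q/2 - 1 = -(1 - q/2) by ring,
            rpow_neg (by linarith : (0:ℝ) ≤ 1 + c * s ^ 2),
            show 2 * c * ((1 + c * s ^ 2) ^ (1 - q/2))⁻¹
              = 2 * c / ((1 + c * s ^ 2) ^ (1 - q/2)) by ring,
            le_div_iff₀ hBpos2]
          linarith
        have h8 : q * s ≤ 2 * c * (1 + c * s ^ 2) ^ (q/2 - 1) * s :=
          mul_le_mul_of_nonneg_right h7 hs0.le
        nlinarith [h3, h8]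
    · norm_num [Real.one_rpow]
  intro s h0 h1
  have := key s h0 h1
  linarith

/-- From the reduced inequality `Q` at exponent `p-2`, deduce the main inequality at `p`. -/
private lemma M_of_Q (p : ℝ) (hp : 2 ≤ p)
    (hQ : ∀ s : ℝ, 0 < s → s < 1 →
      (1+s)^(p-2) + (1-s)^(p-2) ≤ 2*(1+(p-1)*s^2)^((p-2)/2)) :
    ∀ t : ℝ, 0 ≤ t → t ≤ 1 → (1+t)^p + (1-t)^p ≤ 2*(1+(p-1)*t^2)^(p/2) := by
  set c : ℝ := p - 1 with hc
  have hc1 : (1:ℝ) ≤ c := by rw [hc]; linarith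
  -- Step 1 (D1): (1+t)^{p-1} - (1-t)^{p-1} ≤ 2 c t (1+c t²)^{(p-2)/2} on [0,1]
  have D1 : ∀ t : ℝ, 0 ≤ t → t ≤ 1 →
      (1+t)^(p-1) - (1-t)^(p-1) ≤ 2*c*t*(1+c*t^2)^((p-2)/2) := by
    have key : ∀ t, 0 ≤ t → t ≤ 1 →
        0 ≤ 2*c*t*(1+c*t^2)^((p-2)/2) - (1+t)^(p-1) + (1-t)^(p-1) := by
      apply nonneg_of_deriv _
        (fun t => (2*c*(1+c*t^2)^((p-2)/2)
            + 2*c*t*(c*(2*t)*((p-2)/2)*(1+c*t^2)^((p-2)/2 - 1)))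
          - (p-1)*(1+t)^(p-1-1) + -((p-1)*(1-t)^(p-1-1)))
      · have : Continuous (fun t : ℝ => 2*c*t*(1+c*t^2)^((p-2)/2)) := by
          exact (continuous_const.mul continuous_id).mul (cont_B c _ (by linarith))
        exact ((this.sub (cont_one_add (p-1) (by linarith))).add
          (cont_one_sub (p-1) (by linarith))).continuousOn
      · intro t ht
        have hB : 0 < 1 + c * t ^ 2 := by nlinarith [sq_nonneg t]
        have d1 : HasDerivAt (fun t : ℝ => 2*c*t*(1+c*t^2)^((p-2)/2))
            (2*c*(1+c*t^2)^((p-2)/2)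
              + 2*c*t*(c*(2*t)*((p-2)/2)*(1+c*t^2)^((p-2)/2 - 1))) t := by
          have h := (((hasDerivAt_id t).const_mul (2*c)).mul (hasDerivAt_B c ((p-2)/2) t hB))
          simp only [id_eq] at h
          change HasDerivAt (fun t : ℝ => 2*c*t*(1+c*t^2)^((p-2)/2)) _ t at h
          convert h using 1
          ring
        exact (d1.sub (hasDerivAt_one_add (p-1) t (by nlinarith [ht.1]))).add
          (hasDerivAt_one_sub (p-1) t (by nlinarith [ht.2]))
      · intro t ht
        obtain ⟨ht0, ht1⟩ := ht
        have hB : 0 < 1 + c * t ^ 2 := by nlinarith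
        have hQt := hQ t ht0 ht1
        have hBm : (0:ℝ) ≤ (1 + c * t ^ 2) ^ ((p-2)/2 - 1) := rpow_nonneg (by linarith) _
        have h2 : (0:ℝ) ≤ 2*c*t*(c*(2*t)*((p-2)/2)*(1+c*t^2)^((p-2)/2 - 1)) := by
          have h0c : (0:ℝ) ≤ c := by linarith
          have h0p : (0:ℝ) ≤ (p-2)/2 := by linarith
          positivity
        have h3 : (p-1)*((1+t)^(p-2) + (1-t)^(p-2)) ≤ (p-1)*(2*(1+c*t^2)^((p-2)/2)) :=
          mul_le_mul_of_nonneg_left hQt (by linarith)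
        have e1 : p - 1 - 1 = p - 2 := by ring
        rw [e1]
        nlinarith [h3]
      · norm_num [Real.one_rpow]
    intro t h0 h1
    have := key t h0 h1
    linarith
  -- Step 2: conclude via another monotonicity argument
  have key : ∀ t, 0 ≤ t → t ≤ 1 →
      0 ≤ 2*(1+c*t^2)^(p/2) - (1+t)^p - (1-t)^p := by
    apply nonneg_of_deriv _
      (fun t => 2*(c*(2*t)*(p/2)*(1+c*t^2)^(p/2-1))
        - p*(1+t)^(p-1) - -(p*(1-t)^(p-1)))
    · exact ((continuous_const.mul (cont_B c (p/2) (by linarith))).sub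
        (cont_one_add p (by linarith))).sub (cont_one_sub p (by linarith)) |>.continuousOn
    · intro t ht
      have hB : 0 < 1 + c * t ^ 2 := by nlinarith [sq_nonneg t]
      exact (((hasDerivAt_B c (p/2) t hB).const_mul 2).sub
        (hasDerivAt_one_add p t (by nlinarith [ht.1]))).sub
        (hasDerivAt_one_sub p t (by nlinarith [ht.2]))
    · intro t ht
      obtain ⟨ht0, ht1⟩ := ht
      have hD := D1 t ht0.le ht1.le
      have e1 : p/2 - 1 = (p-2)/2 := by ring
      rw [e1]
      have h4 : p * ((1+t)^(p-1) - (1-t)^(p-1)) ≤ p * (2*c*t*(1+c*t^2)^((p-2)/2)) :=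
        mul_le_mul_of_nonneg_left hD (by linarith)
      nlinarith [h4]
    · norm_num [Real.one_rpow]
  intro t h0 h1
  have := key t h0 h1
  linarith

private lemma M_nat : ∀ (N : ℕ) (p : ℝ), 2 ≤ p → p ≤ 2*N + 2 →
    ∀ t : ℝ, 0 ≤ t → t ≤ 1 → (1+t)^p + (1-t)^p ≤ 2*(1+(p-1)*t^2)^(p/2) := by
  intro N
  induction N with
  | zero =>
    intro p h1 h2
    have hp2 : p = 2 := by norm_num at h2; linarith
    subst hp2
    apply M_of_Q 2 le_rfl
    intro s _ _
    norm_num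
  | succ N ih =>
    intro p h1 h2
    apply M_of_Q p h1
    intro s hs0 hs1
    rcases eq_or_lt_of_le h1 with hp2 | hp2
    · rw [← hp2]
      norm_num
    rcases le_or_gt p 4 with hp4 | hp4
    · exact Qsmall (p-2) (p-1) (by linarith) (by linarith) (by linarith)
        (fun h => by linarith) s hs0.le hs1.le
    · have hM := ih (p-2) (by linarith) (by push_cast; push_cast at h2; linarith)
        s hs0.le hs1.le
      calc (1+s)^(p-2) + (1-s)^(p-2) ≤ 2*(1+(p-2-1)*s^2)^((p-2)/2) := hM
        _ ≤ 2*(1+(p-1)*s^2)^((p-2)/2) := by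
            have := rpow_le_rpow (x := 1+(p-2-1)*s^2) (y := 1+(p-1)*s^2) (z := (p-2)/2)
              (by nlinarith [sq_nonneg s]) (by nlinarith [sq_nonneg s]) (by linarith)
            linarith

private lemma M_all (p : ℝ) (hp : 2 ≤ p) :
    ∀ t : ℝ, 0 ≤ t → t ≤ 1 → (1+t)^p + (1-t)^p ≤ 2*(1+(p-1)*t^2)^(p/2) := by
  refine M_nat ⌈p⌉₊ p hp ?_
  have := Nat.le_ceil p
  push_cast
  linarith

/-- key scalar case: `0 ≤ b ≤ a`. -/
private lemma scalar_key₀ (p : ℝ) (hp : 2 ≤ p) (a b : ℝ) (hb : 0 ≤ b) (hba : b ≤ a) :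
    |a+b|^p + |a-b|^p ≤ 2*(a^2 + (p-1)*b^2)^(p/2) := by
  have ha : 0 ≤ a := hb.trans hba
  rcases eq_or_lt_of_le ha with ha0 | ha0
  · -- a = 0, hence b = 0
    have hb0 : b = 0 := le_antisymm (ha0 ▸ hba) hb
    subst hb0
    rw [← ha0]
    simp only [add_zero, sub_zero, abs_zero, mul_zero, zero_mul]
    rw [Real.zero_rpow (show p ≠ 0 by linarith)]
    norm_num
    positivity
  · have hane : a ≠ 0 := ne_of_gt ha0
    set t := b / a with htdef
    have ht0 : 0 ≤ t := div_nonneg hb ha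
    have ht1 : t ≤ 1 := (div_le_one ha0).mpr hba
    have hM := M_all p hp t ht0 ht1
    have hab : a + b = a * (1 + t) := by rw [htdef]; field_simp
    have hab' : a - b = a * (1 - t) := by rw [htdef]; field_simp
    have h1 : |a+b| = a * (1+t) := by
      rw [hab, abs_of_nonneg (by nlinarith)]
    have h2 : |a-b| = a * (1-t) := by
      rw [hab', abs_of_nonneg (by nlinarith)]
    have h3 : a^2 + (p-1)*b^2 = a^2 * (1 + (p-1)*t^2) := by
      rw [htdef]
      field_simp
    rw [h1, h2, h3, Real.mul_rpow ha0.le (by nlinarith),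
      Real.mul_rpow ha0.le (by nlinarith)]
    have hap : (a^2 : ℝ) ^ (p/2) = a ^ p := by
      rw [show (a^2 : ℝ) = a ^ (2:ℝ) by rw [show (2:ℝ) = ((2:ℕ):ℝ) by norm_num, rpow_natCast],
        ← Real.rpow_mul ha0.le, show (2:ℝ)*(p/2) = p by ring]
    rw [Real.mul_rpow (by nlinarith) (by nlinarith), hap]
    have hpow : a ^ p * ((1+t)^p + (1-t)^p) ≤ a ^ p * (2*(1+(p-1)*t^2)^(p/2)) :=
      mul_le_mul_of_nonneg_left hM (rpow_nonneg ha0.le p)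
    ring_nf
    ring_nf at hpow
    linarith

/-- key scalar case: `0 ≤ a`, `0 ≤ b`. -/
private lemma scalar_key₁ (p : ℝ) (hp : 2 ≤ p) (a b : ℝ) (ha : 0 ≤ a) (hb : 0 ≤ b) :
    |a+b|^p + |a-b|^p ≤ 2*(a^2 + (p-1)*b^2)^(p/2) := by
  rcases le_or_gt b a with h | h
  · exact scalar_key₀ p hp a b hb h
  · have := scalar_key₀ p hp b a ha h.le
    have e1 : |b + a| = |a + b| := by rw [add_comm]
    have e2 : |b - a| = |a - b| := abs_sub_comm b a
    rw [e1, e2] at this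
    refine this.trans ?_
    have hmono : (b^2 + (p-1)*a^2 : ℝ) ≤ a^2 + (p-1)*b^2 := by
      nlinarith [mul_nonneg (by linarith : (0:ℝ) ≤ p - 2)
        (by nlinarith : (0:ℝ) ≤ b^2 - a^2)]
    have := rpow_le_rpow (by nlinarith) hmono (by linarith : (0:ℝ) ≤ p/2)
    linarith

/-- **two-point scalar inequality** (Ball–Carlen–Lieb): for `p ≥ 2`,
`|a+b|^p + |a-b|^p ≤ 2 (a² + (p-1) b²)^{p/2}`. -/
private lemma scalar_key (p : ℝ) (hp : 2 ≤ p) (a b : ℝ) :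
    |a+b|^p + |a-b|^p ≤ 2*(a^2 + (p-1)*b^2)^(p/2) := by
  wlog hb : 0 ≤ b generalizing b with H
  · have := H (-b) (by linarith)
    have e1 : |a + -b| = |a - b| := by ring_nf
    have e2 : |a - -b| = |a + b| := by ring_nf
    rw [e1, e2] at this
    have e3 : ((-b)^2 : ℝ) = b^2 := by ring
    rw [e3] at this
    linarith
  wlog ha : 0 ≤ a generalizing a with H2
  · have := H2 (-a) (by linarith)
    have e1 : |-a + b| = |a - b| := by
      rw [← abs_neg]; ring_nf
    have e2 : |-a - b| = |a + b| := by
      rw [← abs_neg]; ring_nf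
    rw [e1, e2] at this
    have e3 : ((-a)^2 : ℝ) = a^2 := by ring
    rw [e3] at this
    linarith
  exact scalar_key₁ p hp a b ha hb

section lpNormLemmas

variable {ι : Type*} [Fintype ι] {p : ℝ}

private lemma lpNorm_nonneg (x : ι → ℝ) : 0 ≤ lpNorm p x :=
  Real.rpow_nonneg (Finset.sum_nonneg fun j _ => Real.rpow_nonneg (abs_nonneg _) _) _

private lemma lpNorm_zero (hp : 0 < p) : lpNorm p (0 : ι → ℝ) = 0 := by
  unfold lpNorm
  simp only [Pi.zero_apply, abs_zero, Real.zero_rpow hp.ne']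
  rw [Finset.sum_const_zero, Real.zero_rpow]
  positivity

private lemma lpNorm_neg (x : ι → ℝ) : lpNorm p (-x) = lpNorm p x := by
  unfold lpNorm
  simp [abs_neg]

private lemma lpNorm_sq (hp : 0 < p) (x : ι → ℝ) :
    lpNorm p x ^ 2 = (∑ j, |x j| ^ p) ^ (2/p) := by
  unfold lpNorm
  rw [show ((∑ j, |x j| ^ p) ^ ((1:ℝ)/p)) ^ (2:ℕ)
      = ((∑ j, |x j| ^ p) ^ ((1:ℝ)/p)) ^ ((2:ℕ):ℝ) by rw [Real.rpow_natCast],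
    ← Real.rpow_mul (Finset.sum_nonneg fun j _ => Real.rpow_nonneg (abs_nonneg _) _)]
  congr 1
  push_cast
  ring

private lemma lpNorm_add_le (hp : 1 ≤ p) (x y : ι → ℝ) :
    lpNorm p (x + y) ≤ lpNorm p x + lpNorm p y := by
  unfold lpNorm
  have := Real.Lp_add_le Finset.univ x y hp
  simpa using this

private lemma lpNorm_smul (hp : 0 < p) (c : ℝ) (x : ι → ℝ) :
    lpNorm p (c • x) = |c| * lpNorm p x := by
  unfold lpNorm
  have h1 : ∀ j, |(c • x) j| ^ p = |c| ^ p * |x j| ^ p := by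
    intro j
    rw [Pi.smul_apply, smul_eq_mul, abs_mul, Real.mul_rpow (abs_nonneg _) (abs_nonneg _)]
  simp only [h1]
  rw [← Finset.mul_sum, Real.mul_rpow (Real.rpow_nonneg (abs_nonneg _) _)
    (Finset.sum_nonneg fun j _ => Real.rpow_nonneg (abs_nonneg _) _),
    ← Real.rpow_mul (abs_nonneg _), mul_one_div, div_self hp.ne', Real.rpow_one]

/-- Ball–Carlen–Lieb two-point inequality for the ℓ_p norm, `p ≥ 2`. -/
private lemma lpNorm_two_point (hp : 2 ≤ p) (x y : ι → ℝ) :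
    lpNorm p (x + y) ^ 2 + lpNorm p (x - y) ^ 2
      ≤ 2 * lpNorm p x ^ 2 + 2 * (p - 1) * lpNorm p y ^ 2 := by
  have hp0 : 0 < p := by linarith
  set A := ∑ j, |(x + y) j| ^ p with hA
  set B := ∑ j, |(x - y) j| ^ p with hB
  have hA0 : 0 ≤ A := Finset.sum_nonneg fun j _ => Real.rpow_nonneg (abs_nonneg _) _
  have hB0 : 0 ≤ B := Finset.sum_nonneg fun j _ => Real.rpow_nonneg (abs_nonneg _) _
  set r := 2 / p with hr
  have hr0 : 0 ≤ r := by positivity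
  have hr1 : r ≤ 1 := by rw [hr]; rw [div_le_one hp0]; linarith
  -- concavity step
  have conc : A ^ r + B ^ r ≤ 2 * ((A + B)/2) ^ r := by
    have hcc := (Real.concaveOn_rpow hr0 hr1).2 (Set.mem_Ici.mpr hA0) (Set.mem_Ici.mpr hB0)
      (by norm_num : (0:ℝ) ≤ 1/2) (by norm_num : (0:ℝ) ≤ 1/2) (by norm_num)
    simp only [smul_eq_mul] at hcc
    have e : (1/2 : ℝ) * A + (1/2) * B = (A + B)/2 := by ring
    rw [e] at hcc
    linarith
  -- termwise scalar inequality
  set T := ∑ j, (x j ^ 2 + (p - 1) * y j ^ 2) ^ (p/2) with hT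
  have hterm : A + B ≤ 2 * T := by
    rw [hA, hB, hT, ← Finset.sum_add_distrib, Finset.mul_sum]
    apply Finset.sum_le_sum
    intro j _
    have := scalar_key p hp (x j) (y j)
    simpa using this
  have hT0 : 0 ≤ T := Finset.sum_nonneg fun j _ =>
    Real.rpow_nonneg (by nlinarith [sq_nonneg (x j), sq_nonneg (y j)]) _
  have conc2 : A ^ r + B ^ r ≤ 2 * T ^ r := by
    refine conc.trans ?_
    have : ((A+B)/2 : ℝ) ^ r ≤ T ^ r :=
      Real.rpow_le_rpow (by linarith) (by linarith) hr0
    linarith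
  -- Minkowski step
  have mink : T ^ r ≤ lpNorm p x ^ 2 + (p - 1) * lpNorm p y ^ 2 := by
    have hmk := Real.Lp_add_le Finset.univ (fun j => x j ^ 2)
      (fun j => (p - 1) * y j ^ 2) (by linarith : (1:ℝ) ≤ p/2)
    have e1 : ∀ j : ι, |x j ^ 2 + (p - 1) * y j ^ 2| ^ (p/2)
        = (x j ^ 2 + (p - 1) * y j ^ 2) ^ (p/2) := by
      intro j
      rw [abs_of_nonneg (by nlinarith [sq_nonneg (x j), sq_nonneg (y j)])]
    have e2 : ∀ j : ι, |x j ^ 2| ^ (p/2) = |x j| ^ p := by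
      intro j
      rw [abs_of_nonneg (sq_nonneg _), show (x j ^ 2 : ℝ) = |x j| ^ (2:ℕ) by rw [sq_abs],
        show (|x j| ^ (2:ℕ) : ℝ) = |x j| ^ ((2:ℕ):ℝ) by rw [Real.rpow_natCast],
        ← Real.rpow_mul (abs_nonneg _), show ((2:ℕ):ℝ) * (p/2) = p by push_cast; ring]
    have e3 : ∀ j : ι, |(p - 1) * y j ^ 2| ^ (p/2) = (p-1) ^ (p/2) * |y j| ^ p := by
      intro j
      rw [abs_mul, abs_of_nonneg (by linarith : (0:ℝ) ≤ p - 1), abs_of_nonneg (sq_nonneg _),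
        Real.mul_rpow (by linarith) (sq_nonneg _),
        show (y j ^ 2 : ℝ) = |y j| ^ (2:ℕ) by rw [sq_abs],
        show (|y j| ^ (2:ℕ) : ℝ) = |y j| ^ ((2:ℕ):ℝ) by rw [Real.rpow_natCast],
        ← Real.rpow_mul (abs_nonneg _), show ((2:ℕ):ℝ) * (p/2) = p by push_cast; ring]
    simp only [e1, e2, e3] at hmk
    have e4 : (1 : ℝ) / (p/2) = r := by rw [hr]; field_simp
    rw [e4] at hmk
    have e5 : (∑ j, (p-1) ^ (p/2) * |y j| ^ p) = (p-1) ^ (p/2) * ∑ j, |y j| ^ p := by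
      rw [Finset.mul_sum]
    rw [e5] at hmk
    have e6 : ((p-1) ^ (p/2) * ∑ j, |y j| ^ p) ^ r
        = (p - 1) * (∑ j, |y j| ^ p) ^ r := by
      rw [Real.mul_rpow (Real.rpow_nonneg (by linarith) _)
        (Finset.sum_nonneg fun j _ => Real.rpow_nonneg (abs_nonneg _) _),
        ← Real.rpow_mul (by linarith : (0:ℝ) ≤ p - 1),
        show (p/2) * r = 1 by rw [hr]; field_simp, Real.rpow_one]
    rw [e6] at hmk
    rw [lpNorm_sq hp0, lpNorm_sq hp0, ← hr]
    exact hmk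
  have lx : lpNorm p (x + y) ^ 2 = A ^ r := by rw [lpNorm_sq hp0, hr, hA]
  have ly : lpNorm p (x - y) ^ 2 = B ^ r := by rw [lpNorm_sq hp0, hr, hB]
  rw [lx, ly]
  calc A ^ r + B ^ r ≤ 2 * T ^ r := conc2
    _ ≤ 2 * (lpNorm p x ^ 2 + (p - 1) * lpNorm p y ^ 2) := by linarith
    _ = 2 * lpNorm p x ^ 2 + 2 * (p - 1) * lpNorm p y ^ 2 := by ring

end lpNormLemmas

section MainLemmas

variable {ι : Type*} [Fintype ι] {p : ℝ} {n : ℕ}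

private lemma lpNorm_sum_smul_le (hp : 1 ≤ p) (w : Fin n → ℝ) (hw : ∀ l, 0 ≤ w l)
    (z : Fin n → ι → ℝ) :
    lpNorm p (∑ l, w l • z l) ≤ ∑ l, w l * lpNorm p (z l) := by
  have hp0 : 0 < p := by linarith
  classical
  have main : ∀ t : Finset (Fin n),
      lpNorm p (∑ l ∈ t, w l • z l) ≤ ∑ l ∈ t, w l * lpNorm p (z l) := by
    intro t
    induction t using Finset.induction_on with
    | empty => simp [lpNorm_zero hp0]
    | @insert a t ha ih =>
      rw [Finset.sum_insert ha, Finset.sum_insert ha]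
      calc lpNorm p (w a • z a + ∑ l ∈ t, w l • z l)
          ≤ lpNorm p (w a • z a) + lpNorm p (∑ l ∈ t, w l • z l) := lpNorm_add_le hp _ _
        _ ≤ w a * lpNorm p (z a) + ∑ l ∈ t, w l * lpNorm p (z l) := by
            rw [lpNorm_smul hp0, abs_of_nonneg (hw a)]
            exact add_le_add_right ih _
  exact main Finset.univ

private lemma lpNorm_sq_jensen (hp : 2 ≤ p) (w : Fin n → ℝ) (hw : ∀ l, 0 ≤ w l)
    (hw1 : ∑ l, w l = 1) (z : Fin n → ι → ℝ) :
    lpNorm p (∑ l, w l • z l) ^ 2 ≤ ∑ l, w l * lpNorm p (z l) ^ 2 := by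
  have h1 : lpNorm p (∑ l, w l • z l) ≤ ∑ l, w l * lpNorm p (z l) :=
    lpNorm_sum_smul_le (by linarith) w hw z
  have h2 : (∑ l, w l * lpNorm p (z l)) ^ 2 ≤ ∑ l, w l * lpNorm p (z l) ^ 2 := by
    have hcs := Finset.sum_mul_sq_le_sq_mul_sq Finset.univ
      (fun l => Real.sqrt (w l)) (fun l => Real.sqrt (w l) * lpNorm p (z l))
    have e1 : ∀ l : Fin n, Real.sqrt (w l) * (Real.sqrt (w l) * lpNorm p (z l))
        = w l * lpNorm p (z l) := by
      intro l
      rw [← mul_assoc, Real.mul_self_sqrt (hw l)]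
    have e2 : ∀ l : Fin n, Real.sqrt (w l) ^ 2 = w l := fun l => Real.sq_sqrt (hw l)
    have e3 : ∀ l : Fin n, (Real.sqrt (w l) * lpNorm p (z l)) ^ 2
        = w l * lpNorm p (z l) ^ 2 := by
      intro l
      rw [mul_pow, Real.sq_sqrt (hw l)]
    simp only [e1, e2, e3] at hcs
    rw [hw1, one_mul] at hcs
    exact hcs
  calc lpNorm p (∑ l, w l • z l) ^ 2 ≤ (∑ l, w l * lpNorm p (z l)) ^ 2 := by
        apply pow_le_pow_left₀ (lpNorm_nonneg _) h1
    _ ≤ _ := h2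

/-- The one-step inequality of Maurey's empirical method. -/
private lemma maurey_step (hp : 2 ≤ p) (lam : Fin n → ℝ) (hlam0 : ∀ j, 0 ≤ lam j)
    (hlam1 : ∑ j, lam j = 1) (v : Fin n → ι → ℝ) (hv : ∀ i, lpNorm p (v i) ≤ 1)
    (u : ι → ℝ) (hu : ∑ j, lam j • v j = u) (s : ι → ℝ) :
    ∑ j, lam j * lpNorm p (s + (v j - u)) ^ 2
      ≤ lpNorm p s ^ 2 + 4 * (p - 1) := by
  have hp0 : 0 < p := by linarith
  set F : Fin n → Fin n → ℝ := fun j l => lpNorm p (s + v j - v l) ^ 2 with hF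
  -- representation + Jensen
  have hjen : ∀ j, lpNorm p (s + (v j - u)) ^ 2 ≤ ∑ l, lam l * F j l := by
    intro j
    have hrep : s + (v j - u) = ∑ l, lam l • (s + v j - v l) := by
      have : ∑ l, lam l • (s + v j - v l)
          = ∑ l, (lam l • (s + v j) - lam l • v l) := by
        apply Finset.sum_congr rfl
        intro l _
        rw [smul_sub]
      rw [this, Finset.sum_sub_distrib, ← Finset.sum_smul, hlam1, one_smul, hu]
      abel
    rw [hrep]
    exact lpNorm_sq_jensen hp lam hlam0 hlam1 _
  -- two-point bound
  have htp : ∀ j l, F j l + F l j ≤ 2 * lpNorm p s ^ 2 + 8 * (p - 1) := by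
    intro j l
    have e1 : s + v j - v l = s + (v j - v l) := by abel
    have e2 : s + v l - v j = s - (v j - v l) := by abel
    have h2p := lpNorm_two_point hp s (v j - v l)
    have hd : lpNorm p (v j - v l) ≤ 2 := by
      have : (v j - v l : ι → ℝ) = v j + -(v l) := by abel
      rw [this]
      calc lpNorm p (v j + -(v l)) ≤ lpNorm p (v j) + lpNorm p (-(v l)) :=
            lpNorm_add_le (by linarith) _ _
        _ ≤ 2 := by rw [lpNorm_neg]; linarith [hv j, hv l]
    have hd2 : lpNorm p (v j - v l) ^ 2 ≤ 4 := by
      have := pow_le_pow_left₀ (lpNorm_nonneg _) hd 2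
      norm_num at this
      exact this
    rw [hF]
    dsimp only
    rw [e1, e2]
    nlinarith [h2p]
  -- symmetrization
  have hswap : ∑ j, ∑ l, lam j * (lam l * F j l) = ∑ j, ∑ l, lam j * (lam l * F l j) := by
    rw [Finset.sum_comm]
    apply Finset.sum_congr rfl
    intro j _
    apply Finset.sum_congr rfl
    intro l _
    ring
  have hsumC : ∀ C : ℝ, ∑ j, ∑ l, lam j * (lam l * C) = C := by
    intro C
    simp_rw [← Finset.mul_sum, ← Finset.sum_mul, hlam1]
    simp
  have hD : ∑ j, ∑ l, lam j * (lam l * F j l) ≤ lpNorm p s ^ 2 + 4 * (p - 1) := by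
    have h2D : (∑ j, ∑ l, lam j * (lam l * F j l)) + (∑ j, ∑ l, lam j * (lam l * F j l))
        ≤ ∑ j, ∑ l, lam j * (lam l * (2 * lpNorm p s ^ 2 + 8 * (p - 1))) := by
      nth_rewrite 2 [hswap]
      rw [← Finset.sum_add_distrib]
      apply Finset.sum_le_sum
      intro j _
      rw [← Finset.sum_add_distrib]
      apply Finset.sum_le_sum
      intro l _
      have hnn : 0 ≤ lam j * lam l := mul_nonneg (hlam0 j) (hlam0 l)
      have := mul_le_mul_of_nonneg_left (htp j l) hnn
      nlinarith [this]
    rw [hsumC] at h2D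
    linarith
  calc ∑ j, lam j * lpNorm p (s + (v j - u)) ^ 2
      ≤ ∑ j, lam j * ∑ l, lam l * F j l := by
        apply Finset.sum_le_sum
        intro j _
        exact mul_le_mul_of_nonneg_left (hjen j) (hlam0 j)
    _ = ∑ j, ∑ l, lam j * (lam l * F j l) := by
        apply Finset.sum_congr rfl
        intro j _
        rw [Finset.mul_sum]
    _ ≤ lpNorm p s ^ 2 + 4 * (p - 1) := hD

end MainLemmas

section Expectation

variable {ι : Type*} [Fintype ι] {p : ℝ} {n : ℕ}

private lemma W_sum (lam : Fin n → ℝ) (hlam1 : ∑ j, lam j = 1) :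
    ∀ m : ℕ, ∑ i : Fin m → Fin n, ∏ t, lam (i t) = 1 := by
  intro m
  induction m with
  | zero => simp
  | succ m ih =>
    rw [← Equiv.sum_comp (Fin.consEquiv (fun _ => Fin n))
      (fun i => ∏ t, lam (i t)), Fintype.sum_prod_type]
    simp only [Fin.consEquiv_apply]
    have e : ∀ (j : Fin n) (i' : Fin m → Fin n),
        (∏ t : Fin (m+1), lam (Fin.cons (α := fun _ => Fin n) j i' t)) = lam j * ∏ t, lam (i' t) := by
      intro j i'
      rw [Fin.prod_univ_succ]
      simp [Fin.cons_zero, Fin.cons_succ]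
    simp_rw [e, ← Finset.mul_sum, ih, mul_one]
    exact hlam1

private lemma E_bound (hp : 2 ≤ p) (lam : Fin n → ℝ) (hlam0 : ∀ j, 0 ≤ lam j)
    (hlam1 : ∑ j, lam j = 1) (v : Fin n → ι → ℝ) (hv : ∀ i, lpNorm p (v i) ≤ 1)
    (u : ι → ℝ) (hu : ∑ j, lam j • v j = u) :
    ∀ m : ℕ, ∑ i : Fin m → Fin n,
        (∏ t, lam (i t)) * lpNorm p (∑ t, (v (i t) - u)) ^ 2 ≤ 4 * (p - 1) * m := by
  have hp0 : 0 < p := by linarith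
  intro m
  induction m with
  | zero =>
    simp [lpNorm_zero hp0]
  | succ m ih =>
    rw [← Equiv.sum_comp (Fin.consEquiv (fun _ => Fin n))
      (fun i => (∏ t, lam (i t)) * lpNorm p (∑ t, (v (i t) - u)) ^ 2),
      Fintype.sum_prod_type]
    simp only [Fin.consEquiv_apply]
    have e : ∀ (j : Fin n) (i' : Fin m → Fin n),
        (∏ t : Fin (m+1), lam (Fin.cons (α := fun _ => Fin n) j i' t)) * lpNorm p (∑ t : Fin (m+1), (v (Fin.cons (α := fun _ => Fin n) j i' t) - u)) ^ 2
          = lam j * ((∏ t, lam (i' t)) * lpNorm p ((∑ t, (v (i' t) - u)) + (v j - u)) ^ 2) := by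
      intro j i'
      rw [Fin.prod_univ_succ, Fin.sum_univ_succ]
      simp only [Fin.cons_zero, Fin.cons_succ]
      rw [show (v j - u) + ∑ t : Fin m, (v (i' t) - u) = (∑ t : Fin m, (v (i' t) - u)) + (v j - u) by abel]
      ring
    simp_rw [e]
    rw [Finset.sum_comm]
    have step : ∀ i' : Fin m → Fin n,
        ∑ j, lam j * ((∏ t, lam (i' t)) * lpNorm p ((∑ t, (v (i' t) - u)) + (v j - u)) ^ 2)
          ≤ (∏ t, lam (i' t)) * (lpNorm p (∑ t, (v (i' t) - u)) ^ 2 + 4 * (p - 1)) := by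
      intro i'
      have hW0 : 0 ≤ ∏ t, lam (i' t) := Finset.prod_nonneg fun t _ => hlam0 (i' t)
      have hms := maurey_step hp lam hlam0 hlam1 v hv u hu (∑ t, (v (i' t) - u))
      calc ∑ j, lam j * ((∏ t, lam (i' t)) * lpNorm p ((∑ t, (v (i' t) - u)) + (v j - u)) ^ 2)
          = (∏ t, lam (i' t)) * ∑ j, lam j * lpNorm p ((∑ t, (v (i' t) - u)) + (v j - u)) ^ 2 := by
            rw [Finset.mul_sum]
            apply Finset.sum_congr rfl
            intro j _
            ring
        _ ≤ (∏ t, lam (i' t)) * (lpNorm p (∑ t, (v (i' t) - u)) ^ 2 + 4 * (p - 1)) :=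
            mul_le_mul_of_nonneg_left hms hW0
    calc ∑ i' : Fin m → Fin n, ∑ j, lam j * ((∏ t, lam (i' t)) * lpNorm p ((∑ t, (v (i' t) - u)) + (v j - u)) ^ 2)
        ≤ ∑ i' : Fin m → Fin n, (∏ t, lam (i' t)) * (lpNorm p (∑ t, (v (i' t) - u)) ^ 2 + 4 * (p - 1)) :=
          Finset.sum_le_sum fun i' _ => step i'
      _ = (∑ i' : Fin m → Fin n, (∏ t, lam (i' t)) * lpNorm p (∑ t, (v (i' t) - u)) ^ 2)
          + (∑ i' : Fin m → Fin n, (∏ t, lam (i' t))) * (4 * (p - 1)) := by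
          simp_rw [mul_add]
          rw [Finset.sum_add_distrib, Finset.sum_mul]
      _ ≤ 4 * (p - 1) * m + 1 * (4 * (p - 1)) := by
          rw [W_sum lam hlam1 m]
          have : (0:ℝ) ≤ 4 * (p-1) := by linarith
          linarith [ih]
      _ ≤ 4 * (p - 1) * (m + 1 : ℕ) := by push_cast; linarith

end Expectation

/-- **Approximate Carathéodory theorem** (constructive version, Theorem 3.4 of the paper):
any point `u` in the convex hull of points `v₁, …, vₙ` of ℓ_p norm at most 1 can be
approximated to within `ε` in ℓ_p norm by the average of `k` of the points (with
repetitions), for any `k ≥ 4(p-1)/ε²`. -/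
theorem approx_caratheodory (d n : ℕ) (hd : 0 < d) (hn : 0 < n)
    (p : ℝ) (hp : 2 ≤ p) (v : Fin n → Fin d → ℝ)
    (hv : ∀ i, lpNorm p (v i) ≤ 1)
    (u : Fin d → ℝ) (hu : u ∈ convexHull ℝ (Set.range v))
    (ε : ℝ) (hε : 0 < ε) (k : ℕ) (hk : 4 * (p - 1) / ε ^ 2 ≤ (k : ℝ)) :
    ∃ i : Fin k → Fin n,
      lpNorm p (fun j => (1 / (k : ℝ)) * (∑ t, v (i t) j) - u j) ≤ ε := by
  classical
  have hp0 : 0 < p := by linarith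
  have hkpos : (0:ℝ) < (k:ℝ) :=
    lt_of_lt_of_le (div_pos (by linarith) (by positivity)) hk
  -- extract convex weights
  rw [convexHull_range_eq_exists_affineCombination] at hu
  obtain ⟨s, w, hw0, hw1, hcomb⟩ := hu
  set lam : Fin n → ℝ := fun j => if j ∈ s then w j else 0 with hlamdef
  have hlam0 : ∀ j, 0 ≤ lam j := by
    intro j
    rw [hlamdef]
    dsimp only
    split
    · exact hw0 j ‹_›
    · exact le_rfl
  have hlam1 : ∑ j, lam j = 1 := by
    rw [hlamdef]
    rw [Finset.sum_ite_mem, Finset.univ_inter]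
    exact hw1
  have hlamu : ∑ j, lam j • v j = u := by
    have e : ∀ j, lam j • v j = if j ∈ s then w j • v j else 0 := by
      intro j
      rw [hlamdef]
      dsimp only
      split <;> simp
    simp_rw [e]
    rw [Finset.sum_ite_mem, Finset.univ_inter, ← hcomb,
      affineCombination_eq_linear_combination s v w hw1]
  -- a good multiset exists
  obtain ⟨i, hi⟩ : ∃ i : Fin k → Fin n,
      lpNorm p (∑ t, (v (i t) - u)) ^ 2 ≤ 4 * (p - 1) * k := by
    by_contra hcon
    push_neg at hcon
    have hex : ∃ i₀ : Fin k → Fin n, 0 < ∏ t, lam (i₀ t) := by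
      by_contra hex
      push_neg at hex
      have hz : ∀ i₀ : Fin k → Fin n, (∏ t, lam (i₀ t)) = 0 := fun i₀ =>
        le_antisymm (hex i₀) (Finset.prod_nonneg fun t _ => hlam0 _)
      have hws := W_sum lam hlam1 k
      rw [Finset.sum_congr rfl (fun i₁ _ => hz i₁)] at hws
      simp at hws
    obtain ⟨i₀, hi₀⟩ := hex
    have hlt : (∑ i₁ : Fin k → Fin n, (∏ t, lam (i₁ t)) * (4 * (p - 1) * k))
        < ∑ i₁ : Fin k → Fin n, (∏ t, lam (i₁ t)) * lpNorm p (∑ t, (v (i₁ t) - u)) ^ 2 := by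
      apply Finset.sum_lt_sum
      · intro i₁ _
        exact mul_le_mul_of_nonneg_left (hcon i₁).le
          (Finset.prod_nonneg fun t _ => hlam0 _)
      · exact ⟨i₀, Finset.mem_univ _, mul_lt_mul_of_pos_left (hcon i₀) hi₀⟩
    rw [← Finset.sum_mul, W_sum lam hlam1 k, one_mul] at hlt
    exact absurd (E_bound hp lam hlam0 hlam1 v hv u hlamu k) (not_le.mpr hlt)
  -- rescale
  refine ⟨i, ?_⟩
  have hkey : (∑ t, (v (i t) - u))
      = (k:ℝ) • (fun j => (1 / (k:ℝ)) * (∑ t, v (i t) j) - u j) := by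
    funext j
    rw [Finset.sum_apply]
    simp only [Pi.sub_apply, Pi.smul_apply, smul_eq_mul]
    rw [Finset.sum_sub_distrib, Finset.sum_const, Finset.card_univ, Fintype.card_fin]
    have hkne : (k:ℝ) ≠ 0 := ne_of_gt hkpos
    field_simp
    rw [nsmul_eq_mul]
  rw [hkey, lpNorm_smul hp0, abs_of_nonneg hkpos.le, mul_pow] at hi
  set L := lpNorm p (fun j => (1 / (k:ℝ)) * (∑ t, v (i t) j) - u j) with hLdef
  have hL0 : 0 ≤ L := lpNorm_nonneg _
  have hk' : 4 * (p - 1) ≤ (k:ℝ) * ε ^ 2 := by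
    rw [div_le_iff₀ (by positivity)] at hk
    linarith
  have h3 : (k:ℝ)^2 * L^2 ≤ (k:ℝ)^2 * ε^2 := by
    nlinarith [hi, mul_le_mul_of_nonneg_right hk' hkpos.le]
  have h2 : L ^ 2 ≤ ε ^ 2 :=
    le_of_mul_le_mul_left h3 (by positivity)
  have : Real.sqrt (L ^ 2) ≤ Real.sqrt (ε ^ 2) := Real.sqrt_le_sqrt h2
  rwa [Real.sqrt_sq hL0, Real.sqrt_sq hε.le] at this
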